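/- Let α and β be roots of F, with distinguished elements ϱ_α, ϱ_β ∈ F respectively. If ϱ_β(α) < 0 and ϱ_α(β) < 0, then α + β = 0. -/

import Mathlib

/-- Let `M` be a finitely generated free ℤ-module and `F` a finite set of
ℤ-linear functionals on `M` such that every ℚ-valued functional on `M` is a nonnegative
rational combination of the elements of `F`.  If `α` and `β` are roots of `F` with
distinguished elements `ϱα`, `ϱβ`, and `ϱβ α < 0` and `ϱα β < 0`, then `α + β = 0`. -/
theorem root_add_root_eq_zero
    {M : Type*} [AddCommGroup M] [Module.Free ℤ M] [Module.Finite ℤ M]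
    (F : Finset (M →ₗ[ℤ] ℤ))
    (hspan : ∀ φ : M →ₗ[ℤ] ℚ, ∃ c : (M →ₗ[ℤ] ℤ) → ℚ,
        (∀ ϱ, 0 ≤ c ϱ) ∧ ∀ x : M, φ x = ∑ ϱ ∈ F, c ϱ * (ϱ x : ℚ))
    (α β : M) (ϱα ϱβ : M →ₗ[ℤ] ℤ)
    (hϱα : ϱα ∈ F) (hα1 : ϱα α = 1) (hα2 : ∀ ϱ ∈ F, ϱ ≠ ϱα → ϱ α ≤ 0)
    (hϱβ : ϱβ ∈ F) (hβ1 : ϱβ β = 1) (hβ2 : ∀ ϱ ∈ F, ϱ ≠ ϱβ → ϱ β ≤ 0)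
    (h1 : ϱβ α < 0) (h2 : ϱα β < 0) :
    α + β = 0 := by
  have key : ∀ ϱ ∈ F, ϱ (α + β) ≤ 0 := by
    intro ϱ hϱ
    rw [map_add]
    by_cases h : ϱ = ϱα
    · subst h; omega
    by_cases h' : ϱ = ϱβ
    · subst h'; omega
    have := hα2 ϱ hϱ h
    have := hβ2 ϱ hϱ h'
    omega
  have hle : ∀ ψ : M →ₗ[ℤ] ℚ, ψ (α + β) ≤ 0 := by
    intro ψ
    obtain ⟨c, hc, hψ⟩ := hspan ψ
    rw [hψ]
    apply Finset.sum_nonpos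
    intro ϱ hϱ
    have h0 : ((ϱ (α + β) : ℤ) : ℚ) ≤ 0 := by exact_mod_cast key ϱ hϱ
    exact mul_nonpos_iff.2 (Or.inl ⟨hc ϱ, h0⟩)
  have hzero : ∀ ψ : M →ₗ[ℤ] ℚ, ψ (α + β) = 0 := by
    intro ψ
    have h1 := hle ψ
    have h2 := hle (-ψ)
    simp only [LinearMap.neg_apply, neg_nonpos] at h2
    linarith
  set b := Module.Free.chooseBasis ℤ M
  have hcoord : ∀ i, b.repr (α + β) i = 0 := by
    intro i
    have := hzero ((Algebra.linearMap ℤ ℚ).comp (b.coord i))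
    simp only [LinearMap.comp_apply, Algebra.linearMap_apply, Module.Basis.coord_apply] at this
    rw [algebraMap_int_eq, eq_intCast, Int.cast_eq_zero] at this
    exact this
  have : b.repr (α + β) = 0 := Finsupp.ext hcoord
  exact (LinearEquiv.map_eq_zero_iff b.repr).mp this
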